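/- Let p ∈ NC(k,l) and q ∈ NC(l,w) be noncrossing partitions, with b(p), b(q), b(qp) their numbers of blocks, cb(p,q) the number of central blocks removed in the composition qp, and define cy(p,q) = l + b(qp) + cb(p,q) − b(p) − b(q). Then for the tensor product of partitions, cy is additive: if also p' ∈ NC(k',l') and q' ∈ NC(l',w'), then cy(p ⊗ p', q ⊗ q') = cy(p,q) + cy(p',q'). -/

import Mathlib

/-! Noncrossing partitions `NC(k,l)` between `k` upper and `l` lower points,
their tensor product (horizontal concatenation), composition, block counts,
central blocks, and the number of cycles `cy`. -/

/-- The points of a partition in `NC(k,l)`: `k` upper points and `l` lower points. -/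
abbrev NCPt (k l : ℕ) : Type := Fin k ⊕ Fin l

/-- The disjoint union of two setoids (partitions). -/
def sumSetoid {α β : Type*} (s : Setoid α) (t : Setoid β) : Setoid (α ⊕ β) where
  r x y :=
    match x, y with
    | .inl a, .inl b => s.r a b
    | .inr a, .inr b => t.r a b
    | _, _ => False
  iseqv := by
    refine ⟨?_, ?_, ?_⟩
    · rintro (a | a)
      · exact s.iseqv.refl a
      · exact t.iseqv.refl a
    · rintro (a | a) (b | b) h
      · exact s.iseqv.symm h
      · exact h.elim
      · exact h.elim
      · exact t.iseqv.symm h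
    · rintro (a | a) (b | b) (c | c) h₁ h₂
      · exact s.iseqv.trans h₁ h₂
      · exact h₂.elim
      · exact h₁.elim
      · exact h₁.elim
      · exact h₁.elim
      · exact h₁.elim
      · exact h₂.elim
      · exact t.iseqv.trans h₁ h₂

/-- The setoid whose classes are singletons. -/
def discreteSetoid (α : Type*) : Setoid α := ⟨Eq, eq_equivalence⟩

/-- The numbering of the points of `NC(k,l)`: the upper points are numbered
`0, ..., k-1` from left to right and the lower points are numbered
`k, ..., k+l-1` from right to left. -/
def NCPt.num {k l : ℕ} : NCPt k l → ℕ
  | .inl i => (i : ℕ)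
  | .inr j => k + l - 1 - (j : ℕ)

/-- A partition `p` of the points of `NC(k,l)` is noncrossing if there are no four
points `a, b, c, d`, in increasing order of numbering, with `a, c` in one block,
`b, d` in one block, but `a, b` in different blocks. -/
def IsNoncrossing {k l : ℕ} (p : Setoid (NCPt k l)) : Prop :=
  ∀ a b c d : NCPt k l, a.num < b.num → b.num < c.num → c.num < d.num →
    p.r a c → p.r b d → p.r a b

/-- The number of blocks `b(p)` of a partition. -/
noncomputable def nblocks {α : Type*} (p : Setoid α) : ℕ := Nat.card (Quotient p)

/-- The join of `p ∈ NC(k,l)` and `q ∈ NC(l,w)` on the glued set of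
`k` upper, `l` middle and `w` lower points: the equivalence relation generated
by `p` and `q` after identifying the lower points of `p` with the upper points
of `q`. -/
def glue {k l w : ℕ} (p : Setoid (NCPt k l)) (q : Setoid (NCPt l w)) :
    Setoid ((Fin k ⊕ Fin l) ⊕ Fin w) :=
  (sumSetoid p (discreteSetoid (Fin w))) ⊔
    (Setoid.comap (Equiv.sumAssoc (Fin k) (Fin l) (Fin w))
      (sumSetoid (discreteSetoid (Fin k)) q))

/-- The composition `qp ∈ NC(k,w)` of `p ∈ NC(k,l)` and `q ∈ NC(l,w)`: restrict the
glued partition to the outer (non-middle) points. -/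
def compPartition {k l w : ℕ} (p : Setoid (NCPt k l)) (q : Setoid (NCPt l w)) :
    Setoid (NCPt k w) :=
  Setoid.comap (Sum.map Sum.inl id) (glue p q)

/-- The number of central blocks `cb(p,q)`: the blocks of the glued partition
consisting only of middle points. -/
noncomputable def cb {k l w : ℕ} (p : Setoid (NCPt k l)) (q : Setoid (NCPt l w)) : ℕ :=
  Nat.card {c : Quotient (glue p q) //
    ∀ x : (Fin k ⊕ Fin l) ⊕ Fin w, Quotient.mk (glue p q) x = c →
      ∃ j : Fin l, x = Sum.inl (Sum.inr j)}

/-- The number of cycles appearing in the composition of `p ∈ NC(k,l)` with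
`q ∈ NC(l,w)`: `cy(p,q) = l + b(qp) + cb(p,q) − b(p) − b(q)`. -/
noncomputable def cy {k l w : ℕ} (p : Setoid (NCPt k l)) (q : Setoid (NCPt l w)) : ℤ :=
  (l : ℤ) + (nblocks (compPartition p q) : ℤ) + (cb p q : ℤ)
    - (nblocks p : ℤ) - (nblocks q : ℤ)

/-- The tensor product (horizontal concatenation) `p ⊗ p' ∈ NC(k+k', l+l')` of
`p ∈ NC(k,l)` and `p' ∈ NC(k',l')`. -/
def tensorPartition {k l k' l' : ℕ} (p : Setoid (NCPt k l)) (p' : Setoid (NCPt k' l')) :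
    Setoid (NCPt (k + k') (l + l')) :=
  Setoid.comap
    (fun x => (Equiv.sumSumSumComm (Fin k) (Fin k') (Fin l) (Fin l'))
      ((Equiv.sumCongr finSumFinEquiv.symm finSumFinEquiv.symm) x))
    (sumSetoid p p')

section Aux
open Setoid Equiv

variable {α β α' β' γ δ : Type*}

@[simp] theorem sumSetoid_inl_inl {s : Setoid α} {t : Setoid β} (a b : α) :
    (sumSetoid s t).r (.inl a) (.inl b) ↔ s.r a b := Iff.rfl
@[simp] theorem sumSetoid_inr_inr {s : Setoid α} {t : Setoid β} (a b : β) :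
    (sumSetoid s t).r (.inr a) (.inr b) ↔ t.r a b := Iff.rfl
@[simp] theorem sumSetoid_inl_inr {s : Setoid α} {t : Setoid β} (a : α) (b : β) :
    (sumSetoid s t).r (.inl a) (.inr b) ↔ False := Iff.rfl
@[simp] theorem sumSetoid_inr_inl {s : Setoid α} {t : Setoid β} (a : β) (b : α) :
    (sumSetoid s t).r (.inr a) (.inl b) ↔ False := Iff.rfl

theorem comap_comp' (f : α → β) (g : β → γ) (s : Setoid γ) :
    Setoid.comap f (Setoid.comap g s) = Setoid.comap (g ∘ f) s := rfl

theorem nblocks_comap_equiv (e : α ≃ β) (s : Setoid β) :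
    nblocks (Setoid.comap ⇑e s) = nblocks s :=
  Nat.card_congr (Quotient.congr e fun _ _ => Iff.rfl)

/-- Quotient of a disjoint union. -/
noncomputable def quotSumEquiv (s : Setoid α) (t : Setoid β) :
    Quotient (sumSetoid s t) ≃ Quotient s ⊕ Quotient t where
  toFun := Quotient.lift
    (fun x => match x with
      | .inl a => Sum.inl (Quotient.mk s a)
      | .inr b => Sum.inr (Quotient.mk t b))
    (by rintro (a | a) (b | b) h
        · exact congrArg Sum.inl (Quotient.sound h)
        · exact h.elim
        · exact h.elim
        · exact congrArg Sum.inr (Quotient.sound h))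
  invFun := Sum.elim
    (Quotient.lift (fun a => Quotient.mk (sumSetoid s t) (.inl a))
      (fun a b h => Quotient.sound h))
    (Quotient.lift (fun b => Quotient.mk (sumSetoid s t) (.inr b))
      (fun a b h => Quotient.sound h))
  left_inv := by rintro ⟨a | a⟩ <;> rfl
  right_inv := by rintro (a | a) <;> induction a using Quotient.ind <;> rfl

theorem nblocks_sumSetoid [Finite α] [Finite β] (s : Setoid α) (t : Setoid β) :
    nblocks (sumSetoid s t) = nblocks s + nblocks t := by
  rw [nblocks, Nat.card_congr (quotSumEquiv s t), Nat.card_sum]; rfl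

theorem comap_sumMap (f : α → α') (g : β → β') (s : Setoid α') (t : Setoid β') :
    Setoid.comap (Sum.map f g) (sumSetoid s t) = sumSetoid (Setoid.comap f s) (Setoid.comap g t) := by
  apply Setoid.ext; rintro (a | a) (b | b) <;> exact Iff.rfl

theorem sumSetoid_discrete :
    sumSetoid (discreteSetoid α) (discreteSetoid β) = discreteSetoid (α ⊕ β) := by
  apply Setoid.ext; rintro (a | a) (b | b) <;> exact ⟨fun h => by cases h <;> exact rfl, fun h => by cases h <;> exact rfl⟩

theorem comap_discrete {f : α → β} (hf : Function.Injective f) :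
    Setoid.comap f (discreteSetoid β) = discreteSetoid α := by
  apply Setoid.ext; intro a b
  exact ⟨fun h => hf h, fun h => congrArg f h⟩

end Aux
section Aux2
open Setoid

variable {α β γ : Type*}

theorem eqvGen_map {R : α → α → Prop} {S : β → β → Prop} (f : α → β)
    (h : ∀ x y, R x y → S (f x) (f y)) :
    ∀ {x y : α}, Relation.EqvGen R x y → Relation.EqvGen S (f x) (f y) := by
  intro x y hxy
  induction hxy with
  | rel a b hab => exact Relation.EqvGen.rel _ _ (h _ _ hab)
  | refl a => exact Relation.EqvGen.refl _
  | symm a b _ ih => exact ih.symm _ _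
  | trans a b c _ _ ih1 ih2 => exact ih1.trans _ _ _ ih2

theorem sumSetoid_sup (a b : Setoid α) (c d : Setoid β) :
    sumSetoid (a ⊔ b) (c ⊔ d) = sumSetoid a c ⊔ sumSetoid b d := by
  apply le_antisymm
  · rintro (u | u) (v | v) hxy
    · have h' : (a ⊔ b) u v := hxy
      rw [Setoid.sup_eq_eqvGen] at h'
      rw [Setoid.sup_eq_eqvGen]
      have h'' : Relation.EqvGen (fun x y => a.r x y ∨ b.r x y) u v := h'
      exact eqvGen_map (Sum.inl : α → α ⊕ β)
        (fun x y h => h.imp (fun h1 => (h1 : (sumSetoid a c).r (.inl x) (.inl y)))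
          (fun h1 => (h1 : (sumSetoid b d).r (.inl x) (.inl y)))) h''
    · exact hxy.elim
    · exact hxy.elim
    · have h' : (c ⊔ d) u v := hxy
      rw [Setoid.sup_eq_eqvGen] at h'
      rw [Setoid.sup_eq_eqvGen]
      have h'' : Relation.EqvGen (fun x y => c.r x y ∨ d.r x y) u v := h'
      exact eqvGen_map (Sum.inr : β → α ⊕ β)
        (fun x y h => h.imp (fun h1 => (h1 : (sumSetoid a c).r (.inr x) (.inr y)))
          (fun h1 => (h1 : (sumSetoid b d).r (.inr x) (.inr y)))) h''
  · rw [Setoid.sup_eq_eqvGen, Setoid.eqvGen_eq]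
    apply sInf_le
    rintro (u | u) (v | v) h
    · obtain h | h := h
      · exact (le_sup_left : a ≤ a ⊔ b) (h : a.r u v)
      · exact (le_sup_right : b ≤ a ⊔ b) (h : b.r u v)
    · obtain h | h := h <;> exact h.elim
    · obtain h | h := h <;> exact h.elim
    · obtain h | h := h
      · exact (le_sup_left : c ≤ c ⊔ d) (h : c.r u v)
      · exact (le_sup_right : d ≤ c ⊔ d) (h : d.r u v)

theorem comap_equiv_sup (e : α ≃ β) (s t : Setoid β) :
    Setoid.comap ⇑e (s ⊔ t) = Setoid.comap ⇑e s ⊔ Setoid.comap ⇑e t := by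
  apply le_antisymm
  · intro x y hxy
    have hxy' : (s ⊔ t).r (e x) (e y) := hxy
    rw [Setoid.sup_eq_eqvGen] at hxy'
    rw [Setoid.sup_eq_eqvGen]
    have key : ∀ u v : β, Relation.EqvGen (fun x y => s.r x y ∨ t.r x y) u v →
        Relation.EqvGen (fun x y => (Setoid.comap ⇑e s).r x y ∨ (Setoid.comap ⇑e t).r x y)
          (e.symm u) (e.symm v) := by
      intro u v huv
      induction huv with
      | rel a b hab =>
        refine Relation.EqvGen.rel _ _ ?_
        have h1 : e (e.symm a) = a := e.apply_symm_apply a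
        have h2 : e (e.symm b) = b := e.apply_symm_apply b
        exact hab.imp (fun h => by simpa [Setoid.comap_rel, h1, h2] using h)
          (fun h => by simpa [Setoid.comap_rel, h1, h2] using h)
      | refl a => exact Relation.EqvGen.refl _
      | symm a b _ ih => exact ih.symm _ _
      | trans a b c _ _ ih1 ih2 => exact ih1.trans _ _ _ ih2
    have := key _ _ hxy'
    simp only [Equiv.symm_apply_apply] at this; exact this
  · exact sup_le (fun x y h => le_sup_left (b := t) h) (fun x y h => le_sup_right (a := s) h)

theorem comap_sumSumSumComm (sa : Setoid α) (sb : Setoid β) (sc : Setoid γ) {δ : Type*}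
    (sd : Setoid δ) :
    Setoid.comap ⇑(Equiv.sumSumSumComm α β γ δ) (sumSetoid (sumSetoid sa sc) (sumSetoid sb sd))
      = sumSetoid (sumSetoid sa sb) (sumSetoid sc sd) := by
  apply Setoid.ext
  rintro ((a | a) | (a | a)) ((b | b) | (b | b)) <;>
    simp [Setoid.comap_rel, Equiv.sumSumSumComm]

end Aux2
section Aux3
open Setoid Equiv

theorem comap_id' {α : Type*} (s : Setoid α) : Setoid.comap id s = s := rfl

variable {k l w k' l' w' : ℕ}

/-- The tensor map as an equivalence. -/
def tensorEquiv (k l k' l' : ℕ) : NCPt (k + k') (l + l') ≃ NCPt k l ⊕ NCPt k' l' :=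
  (Equiv.sumCongr finSumFinEquiv.symm finSumFinEquiv.symm).trans
    (Equiv.sumSumSumComm (Fin k) (Fin k') (Fin l) (Fin l'))

theorem tensorPartition_eq (p : Setoid (NCPt k l)) (p' : Setoid (NCPt k' l')) :
    tensorPartition p p' = Setoid.comap ⇑(tensorEquiv k l k' l') (sumSetoid p p') := rfl

theorem nblocks_tensor (p : Setoid (NCPt k l)) (p' : Setoid (NCPt k' l')) :
    nblocks (tensorPartition p p') = nblocks p + nblocks p' := by
  rw [tensorPartition_eq, nblocks_comap_equiv, nblocks_sumSetoid]

/-- The equivalence of the glued point sets for the tensor product. -/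
def glueEquiv (k l w k' l' w' : ℕ) :
    ((Fin (k + k') ⊕ Fin (l + l')) ⊕ Fin (w + w')) ≃
      (((Fin k ⊕ Fin l) ⊕ Fin w) ⊕ ((Fin k' ⊕ Fin l') ⊕ Fin w')) :=
  (Equiv.sumCongr (Equiv.sumCongr finSumFinEquiv.symm finSumFinEquiv.symm)
      finSumFinEquiv.symm).trans
    ((Equiv.sumCongr (Equiv.sumSumSumComm (Fin k) (Fin k') (Fin l) (Fin l'))
        (Equiv.refl (Fin w ⊕ Fin w'))).trans
      (Equiv.sumSumSumComm (Fin k ⊕ Fin l) (Fin k' ⊕ Fin l') (Fin w) (Fin w')))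

theorem glue_tensor_left (p : Setoid (NCPt k l)) (p' : Setoid (NCPt k' l')) :
    sumSetoid (tensorPartition p p') (discreteSetoid (Fin (w + w')))
      = Setoid.comap ⇑(glueEquiv k l w k' l' w')
          (sumSetoid (sumSetoid p (discreteSetoid (Fin w)))
            (sumSetoid p' (discreteSetoid (Fin w')))) := by
  have h0 : Setoid.comap ⇑(glueEquiv k l w k' l' w')
        (sumSetoid (sumSetoid p (discreteSetoid (Fin w)))
          (sumSetoid p' (discreteSetoid (Fin w'))))
      = Setoid.comap
          (Sum.map (Sum.map ⇑finSumFinEquiv.symm ⇑finSumFinEquiv.symm) ⇑finSumFinEquiv.symm)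
          (Setoid.comap
            (Sum.map ⇑(Equiv.sumSumSumComm (Fin k) (Fin k') (Fin l) (Fin l')) id)
            (Setoid.comap ⇑(Equiv.sumSumSumComm (Fin k ⊕ Fin l) (Fin k' ⊕ Fin l') (Fin w) (Fin w'))
              (sumSetoid (sumSetoid p (discreteSetoid (Fin w)))
                (sumSetoid p' (discreteSetoid (Fin w')))))) := rfl
  rw [h0, comap_sumSumSumComm, comap_sumMap, comap_sumMap, comap_id',
    sumSetoid_discrete, comap_discrete (finSumFinEquiv.symm.injective)]
  rfl

theorem glue_tensor_right (q : Setoid (NCPt l w)) (q' : Setoid (NCPt l' w')) :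
    Setoid.comap ⇑(Equiv.sumAssoc (Fin (k + k')) (Fin (l + l')) (Fin (w + w')))
        (sumSetoid (discreteSetoid (Fin (k + k'))) (tensorPartition q q'))
      = Setoid.comap ⇑(glueEquiv k l w k' l' w')
          (sumSetoid
            (Setoid.comap ⇑(Equiv.sumAssoc (Fin k) (Fin l) (Fin w))
              (sumSetoid (discreteSetoid (Fin k)) q))
            (Setoid.comap ⇑(Equiv.sumAssoc (Fin k') (Fin l') (Fin w'))
              (sumSetoid (discreteSetoid (Fin k')) q'))) := by
  -- Reduce both sides to comaps of the same base setoid `X`.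
  set X := sumSetoid (sumSetoid (discreteSetoid (Fin k)) q)
      (sumSetoid (discreteSetoid (Fin k')) q') with hX
  -- Right side.
  have hR : Setoid.comap ⇑(glueEquiv k l w k' l' w')
        (sumSetoid
          (Setoid.comap ⇑(Equiv.sumAssoc (Fin k) (Fin l) (Fin w))
            (sumSetoid (discreteSetoid (Fin k)) q))
          (Setoid.comap ⇑(Equiv.sumAssoc (Fin k') (Fin l') (Fin w'))
            (sumSetoid (discreteSetoid (Fin k')) q')))
      = Setoid.comap
          ((Sum.map ⇑(Equiv.sumAssoc (Fin k) (Fin l) (Fin w))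
              ⇑(Equiv.sumAssoc (Fin k') (Fin l') (Fin w'))) ∘ ⇑(glueEquiv k l w k' l' w')) X := by
    rw [← comap_sumMap, comap_comp']
  -- Left side.
  have hq : tensorPartition q q' = Setoid.comap ⇑(tensorEquiv l w l' w') (sumSetoid q q') := rfl
  have hd : discreteSetoid (Fin (k + k'))
      = Setoid.comap ⇑(finSumFinEquiv (m := k) (n := k')).symm
          (sumSetoid (discreteSetoid (Fin k)) (discreteSetoid (Fin k'))) := by
    rw [sumSetoid_discrete, comap_discrete (finSumFinEquiv.symm.injective)]
  have hcomm := comap_sumSumSumComm (discreteSetoid (Fin k)) (discreteSetoid (Fin k')) q q'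
  have hL : Setoid.comap ⇑(Equiv.sumAssoc (Fin (k + k')) (Fin (l + l')) (Fin (w + w')))
        (sumSetoid (discreteSetoid (Fin (k + k'))) (tensorPartition q q'))
      = Setoid.comap
          ((⇑(Equiv.sumSumSumComm (Fin k) (Fin k') (Fin l ⊕ Fin w) (Fin l' ⊕ Fin w'))) ∘
            (Sum.map ⇑finSumFinEquiv.symm ⇑(tensorEquiv l w l' w')) ∘
            ⇑(Equiv.sumAssoc (Fin (k + k')) (Fin (l + l')) (Fin (w + w')))) X := by
    rw [hq, hd, ← comap_sumMap, ← hcomm, comap_comp', comap_comp']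
  rw [hR, hL]
  congr 1
  funext x
  rcases x with ((i | j) | m)
  · rcases h : finSumFinEquiv.symm i with a | a <;>
      simp [glueEquiv, tensorEquiv, Equiv.sumSumSumComm, Equiv.sumAssoc, h]
  · rcases h : finSumFinEquiv.symm j with a | a <;>
      simp [glueEquiv, tensorEquiv, Equiv.sumSumSumComm, Equiv.sumAssoc, h]
  · rcases h : finSumFinEquiv.symm m with a | a <;>
      simp [glueEquiv, tensorEquiv, Equiv.sumSumSumComm, Equiv.sumAssoc, h]

theorem glue_tensor (p : Setoid (NCPt k l)) (q : Setoid (NCPt l w))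
    (p' : Setoid (NCPt k' l')) (q' : Setoid (NCPt l' w')) :
    glue (tensorPartition p p') (tensorPartition q q')
      = Setoid.comap ⇑(glueEquiv k l w k' l' w') (sumSetoid (glue p q) (glue p' q')) := by
  simp only [glue]
  rw [sumSetoid_sup, comap_equiv_sup, glue_tensor_left, glue_tensor_right]

end Aux3
section Aux4
open Setoid Equiv

variable {α β : Type*}

theorem card_central_comap (e : α ≃ β) (s : Setoid β) (t : Setoid α)
    (ht : t = Setoid.comap ⇑e s) (P : α → Prop) (Q : β → Prop)
    (hPQ : ∀ x, P x ↔ Q (e x)) :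
    Nat.card {c : Quotient t // ∀ x, Quotient.mk t x = c → P x}
      = Nat.card {c : Quotient s // ∀ y, Quotient.mk s y = c → Q y} := by
  subst ht
  apply Nat.card_congr
  refine Equiv.subtypeEquiv (Quotient.congr e fun _ _ => Iff.rfl) ?_
  intro c
  induction c using Quotient.ind with
  | _ z =>
    simp only [Quotient.congr_mk]
    constructor
    · intro hc y hy
      have hx : Quotient.mk (Setoid.comap ⇑e s) (e.symm y) = Quotient.mk _ z := by
        apply Quotient.sound
        have : s.r (e (e.symm y)) (e z) := by
          rw [e.apply_symm_apply]
          exact Quotient.exact hy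
        exact this
      have := hc _ hx
      rw [hPQ] at this
      rwa [e.apply_symm_apply] at this
    · intro hc x hx
      rw [hPQ]
      refine hc (e x) ?_
      have h1 : (Setoid.comap ⇑e s).r x z := Quotient.exact hx
      exact Quotient.sound (h1 : s.r (e x) (e z))

theorem card_central_sum [Finite α] [Finite β] (s : Setoid α) (t : Setoid β)
    (P : α → Prop) (Q : β → Prop) :
    Nat.card {c : Quotient (sumSetoid s t) //
        ∀ x, Quotient.mk (sumSetoid s t) x = c → Sum.elim P Q x}
      = Nat.card {c : Quotient s // ∀ x, Quotient.mk s x = c → P x}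
        + Nat.card {c : Quotient t // ∀ x, Quotient.mk t x = c → Q x} := by
  rw [← Nat.card_sum]
  apply Nat.card_congr
  refine Equiv.trans (Equiv.subtypeEquiv
    (q := Sum.elim (fun c => ∀ x, Quotient.mk s x = c → P x)
      (fun c => ∀ x, Quotient.mk t x = c → Q x)) (quotSumEquiv s t) ?_) Equiv.subtypeSum
  intro c
  induction c using Quotient.ind with
  | _ z =>
    rcases z with a | b
    · show _ ↔ ∀ x, Quotient.mk s x = Quotient.mk s a → P x
      constructor
      · intro hc x hx
        exact hc (Sum.inl x) (Quotient.sound (Quotient.exact hx : s.r x a))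
      · intro hc x hx
        rcases x with x | x
        · have h1 : (sumSetoid s t).r (.inl x) (.inl a) := Quotient.exact hx
          exact hc x (Quotient.sound (h1 : s.r x a))
        · exact (Quotient.exact hx : (sumSetoid s t).r (.inr x) (.inl a)).elim
    · show _ ↔ ∀ x, Quotient.mk t x = Quotient.mk t b → Q x
      constructor
      · intro hc x hx
        exact hc (Sum.inr x) (Quotient.sound (Quotient.exact hx : t.r x b))
      · intro hc x hx
        rcases x with x | x
        · exact (Quotient.exact hx : (sumSetoid s t).r (.inl x) (.inr b)).elim
        · have h1 : (sumSetoid s t).r (.inr x) (.inr b) := Quotient.exact hx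
          exact hc x (Quotient.sound (h1 : t.r x b))

end Aux4
section Aux5
open Setoid Equiv

variable {k l w k' l' w' : ℕ}

theorem comp_tensor (p : Setoid (NCPt k l)) (q : Setoid (NCPt l w))
    (p' : Setoid (NCPt k' l')) (q' : Setoid (NCPt l' w')) :
    compPartition (tensorPartition p p') (tensorPartition q q')
      = Setoid.comap ⇑(tensorEquiv k w k' w')
          (sumSetoid (compPartition p q) (compPartition p' q')) := by
  unfold compPartition
  rw [glue_tensor, comap_comp',
    ← comap_sumMap (Sum.map Sum.inl id) (Sum.map Sum.inl id) (glue p q) (glue p' q'),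
    comap_comp' ⇑(tensorEquiv k w k' w')]
  congr 1
  funext x
  rcases x with i | m
  · rcases h : finSumFinEquiv.symm i with a | a <;>
      simp [glueEquiv, tensorEquiv, Equiv.sumSumSumComm, h]
  · rcases h : finSumFinEquiv.symm m with a | a <;>
      simp [glueEquiv, tensorEquiv, Equiv.sumSumSumComm, h]

theorem nblocks_comp_tensor (p : Setoid (NCPt k l)) (q : Setoid (NCPt l w))
    (p' : Setoid (NCPt k' l')) (q' : Setoid (NCPt l' w')) :
    nblocks (compPartition (tensorPartition p p') (tensorPartition q q'))
      = nblocks (compPartition p q) + nblocks (compPartition p' q') := by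
  rw [comp_tensor, nblocks_comap_equiv, nblocks_sumSetoid]

theorem cb_tensor (p : Setoid (NCPt k l)) (q : Setoid (NCPt l w))
    (p' : Setoid (NCPt k' l')) (q' : Setoid (NCPt l' w')) :
    cb (tensorPartition p p') (tensorPartition q q') = cb p q + cb p' q' := by
  have hpred : ∀ x : (Fin (k + k') ⊕ Fin (l + l')) ⊕ Fin (w + w'),
      (∃ j : Fin (l + l'), x = Sum.inl (Sum.inr j)) ↔
        Sum.elim (fun y => ∃ j : Fin l, y = Sum.inl (Sum.inr j))
          (fun y => ∃ j : Fin l', y = Sum.inl (Sum.inr j))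
          (glueEquiv k l w k' l' w' x) := by
    rintro ((i | j) | m)
    · rcases h : finSumFinEquiv.symm i with a | a <;>
        simp [glueEquiv, Equiv.sumSumSumComm, h]
    · rcases h : finSumFinEquiv.symm j with a | a <;>
        simp [glueEquiv, Equiv.sumSumSumComm, h]
    · rcases h : finSumFinEquiv.symm m with a | a <;>
        simp [glueEquiv, Equiv.sumSumSumComm, h]
  unfold cb
  rw [card_central_comap (glueEquiv k l w k' l' w') _ _ (glue_tensor p q p' q') _
      (Sum.elim (fun y => ∃ j : Fin l, y = Sum.inl (Sum.inr j))
        (fun y => ∃ j : Fin l', y = Sum.inl (Sum.inr j))) hpred,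
    card_central_sum]

end Aux5
/-- The number of cycles `cy` is additive with respect to the tensor product
(horizontal concatenation) of noncrossing partitions:
`cy(p ⊗ p', q ⊗ q') = cy(p,q) + cy(p',q')`. -/
theorem cy_tensor_add {k l w k' l' w' : ℕ}
    (p : Setoid (NCPt k l)) (q : Setoid (NCPt l w))
    (p' : Setoid (NCPt k' l')) (q' : Setoid (NCPt l' w'))
    (hp : IsNoncrossing p) (hq : IsNoncrossing q)
    (hp' : IsNoncrossing p') (hq' : IsNoncrossing q') :
    cy (tensorPartition p p') (tensorPartition q q') = cy p q + cy p' q' := by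
  simp only [cy]
  rw [nblocks_comp_tensor, cb_tensor, nblocks_tensor, nblocks_tensor]
  push_cast
  ring
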